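/- Let G be a symmetric 2×2 real matrix satisfying |2·G₀₁| < |G₀₀ + G₁₁|. Then there exists a real number φ such that, for the Lorentz boost matrix S(φ) with entries cosh φ, sinh φ, sinh φ, cosh φ, both S(φ)ᵀ · J · S(φ) = J and the matrix S(φ)ᵀ · G · S(φ) is diagonal. Hence the two metrics given by J and G are simultaneously diagonalized by a Lorentz boost. -/

import Mathlib

open Matrix

/-- The Minkowski metric matrix `diag(1, -1)`. -/
def Jmat : Matrix (Fin 2) (Fin 2) ℝ := !![1, 0; 0, -1]

/-- The Lorentz boost matrix with parameter `φ`. -/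
noncomputable def boost (φ : ℝ) : Matrix (Fin 2) (Fin 2) ℝ :=
  !![Real.cosh φ, Real.sinh φ; Real.sinh φ, Real.cosh φ]

/-- If `G` is a symmetric `2×2` real matrix with `|2 G₀₁| < |G₀₀ + G₁₁|`, then some Lorentz
boost simultaneously preserves `J = diag(1,-1)` and diagonalizes `G`. -/
theorem simultaneous_diagonalization_subcase1 (G : Matrix (Fin 2) (Fin 2) ℝ) (hG : Gᵀ = G)
    (h : |2 * G 0 1| < |G 0 0 + G 1 1|) :
    ∃ φ : ℝ, (boost φ)ᵀ * Jmat * boost φ = Jmat ∧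
      ((boost φ)ᵀ * G * boost φ).IsDiag := by
  set a := G 0 0 with ha
  set b := G 0 1 with hb
  set c := G 1 1 with hc
  have hsym : G 1 0 = b := by rw [← hG, transpose_apply]
  have habs : 0 < |a + c| := lt_of_le_of_lt (abs_nonneg _) h
  have hac : a + c ≠ 0 := by
    intro h0; rw [h0, abs_zero] at habs; exact lt_irrefl 0 habs
  have hsq : (2 * b) ^ 2 < (a + c) ^ 2 := by
    nlinarith [sq_abs (2*b), sq_abs (a+c), abs_nonneg (2*b), abs_nonneg (a+c)]
  set d := Real.sqrt ((a + c) ^ 2 - (2 * b) ^ 2) with hd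
  have hd2 : d ^ 2 = (a + c) ^ 2 - (2 * b) ^ 2 := Real.sq_sqrt (by linarith)
  have hdpos : 0 < d := Real.sqrt_pos.mpr (by linarith)
  set x : ℝ := -(2 * b) * (a + c) / (d * |a + c|) with hx
  set φ := Real.arsinh x / 2 with hφ
  have hpyth : Real.cosh φ ^ 2 - Real.sinh φ ^ 2 = 1 := Real.cosh_sq_sub_sinh_sq φ
  have hxsq : 1 + x ^ 2 = (a + c) ^ 2 / d ^ 2 := by
    rw [hx]
    field_simp
    rw [sq_abs]
    linear_combination ((a + c) ^ 2) * hd2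
  have hsqrt : Real.sqrt (1 + x ^ 2) = |a + c| / d := by
    rw [hxsq, Real.sqrt_div (by positivity), Real.sqrt_sq_eq_abs, Real.sqrt_sq hdpos.le]
  have hsinh2 : 2 * Real.sinh φ * Real.cosh φ = x := by
    rw [← Real.sinh_two_mul, hφ, mul_div_cancel₀ _ (two_ne_zero), Real.sinh_arsinh]
  have hcosh2 : Real.cosh φ ^ 2 + Real.sinh φ ^ 2 = |a + c| / d := by
    have h1 : Real.cosh (2 * φ) = |a + c| / d := by
      rw [hφ, mul_div_cancel₀ _ (two_ne_zero), Real.cosh_arsinh, hsqrt]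
    rw [Real.cosh_two_mul] at h1
    nlinarith
  have hkey : Real.sinh φ * Real.cosh φ * (a + c)
      + b * (Real.cosh φ ^ 2 + Real.sinh φ ^ 2) = 0 := by
    rw [hcosh2]
    have hsc : Real.sinh φ * Real.cosh φ = x / 2 := by linarith
    rw [hsc, hx]
    field_simp
    linear_combination b * sq_abs (a + c)
  clear_value d x
  have hbt : (boost φ)ᵀ = boost φ := by
    ext i j; fin_cases i <;> fin_cases j <;> simp [boost]
  obtain ⟨ψ, hψpyth, hψkey, hψbt⟩ : ∃ ψ : ℝ, Real.cosh ψ ^ 2 - Real.sinh ψ ^ 2 = 1 ∧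
      Real.sinh ψ * Real.cosh ψ * (a + c)
        + b * (Real.cosh ψ ^ 2 + Real.sinh ψ ^ 2) = 0 ∧ (boost ψ)ᵀ = boost ψ :=
    ⟨φ, hpyth, hkey, hbt⟩
  clear hφ hpyth hkey hbt hsinh2 hcosh2 hsqrt hxsq hx hd2 hd
  refine ⟨ψ, ?_, ?_⟩
  · rw [hψbt]
    ext i j
    fin_cases i <;> fin_cases j
    · simp [boost, Jmat, Matrix.mul_apply, Fin.sum_univ_two]
      linarith [hψpyth]
    · simp [boost, Jmat, Matrix.mul_apply, Fin.sum_univ_two]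
      ring
    · simp [boost, Jmat, Matrix.mul_apply, Fin.sum_univ_two]
      ring
    · simp [boost, Jmat, Matrix.mul_apply, Fin.sum_univ_two]
      linarith [hψpyth]
  · have e01 : ((boost ψ)ᵀ * G * boost ψ) 0 1 = 0 := by
      rw [hψbt]
      simp [boost, Matrix.mul_apply, Matrix.vecMul, dotProduct, Fin.sum_univ_two]
      rw [hsym, ← hb, ← ha, ← hc]
      linear_combination hψkey
    have e10 : ((boost ψ)ᵀ * G * boost ψ) 1 0 = 0 := by
      rw [hψbt]
      simp [boost, Matrix.mul_apply, Matrix.vecMul, dotProduct, Fin.sum_univ_two]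
      rw [hsym, ← hb, ← ha, ← hc]
      linear_combination hψkey
    intro i j hij
    fin_cases i <;> fin_cases j
    · exact absurd rfl hij
    · exact e01
    · exact e10
    · exact absurd rfl hij
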